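/- Let p be an odd prime and m ≥ 1 the 2-adic valuation of p−1. Let (f_n) be the m-th level paperfolding sequence. Then the sequence n ↦ f_{p^n − 1} (mod 2) is not eventually periodic; in particular, for every even period d and threshold N there exists n ≥ N with f_{p^{nd}−1} ≢ f_{p^{3nd}−1} (mod 2). -/
import Mathlib


/-- The odd part of a natural number: `n / 2 ^ v₂(n)`. -/
def oddPart (n : ℕ) : ℕ := n / 2 ^ (n.factorization 2)

/-- The `m`-th level paperfolding sequence:
`f n = (1/2) ⌊(k - 1) mod 2^(m+1)⌋` where `k` is the odd part of `n`. -/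
def paperfold (m n : ℕ) : ℕ := ((oddPart n - 1) % 2 ^ (m + 1)) / 2

lemma pf_mod_two (m k : ℕ) (hm : 1 ≤ m) (hk : k % 2 = 1) :
    ((k - 1) % 2 ^ (m + 1)) / 2 % 2 = (k - 1) / 2 % 2 := by
  obtain ⟨t, ht⟩ : ∃ t, k - 1 = 2 * t := ⟨(k - 1) / 2, by omega⟩
  rw [ht, pow_succ, mul_comm (2 ^ m) 2, Nat.mul_mod_mul_left,
    Nat.mul_div_cancel_left _ (by norm_num : 0 < 2),
    Nat.mul_div_cancel_left _ (by norm_num : 0 < 2),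
    Nat.mod_mod_of_dvd _ (dvd_pow_self 2 (by omega : m ≠ 0))]

lemma key (p m n : ℕ) (hp : Odd p) (hp3 : 3 ≤ p) (hm : 1 ≤ m) (hn : Even n) (hn0 : n ≠ 0) :
    paperfold m (p ^ (3 * n) - 1) % 2 ≠ paperfold m (p ^ n - 1) % 2 := by
  set q := p ^ n with hq
  -- q % 4 = 1
  obtain ⟨e, he⟩ := hn
  have hq4 : q % 4 = 1 := by
    have : q = (p ^ 2) % 4 ^ e % 4 → True := fun _ => trivial
    have h1 : q % 4 = (p ^ 2 % 4) ^ e % 4 := by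
      rw [hq, he, show e + e = 2 * e by ring, pow_mul, Nat.pow_mod]
    have h2 : p ^ 2 % 4 = 1 := by
      obtain ⟨c, hc⟩ := hp
      have : p ^ 2 = 4 * (c * c + c) + 1 := by rw [hc]; ring
      omega
    simp [h1, h2]
  have hq1 : 1 ≤ q := Nat.one_le_pow _ _ (by omega)
  have hq3 : 3 ≤ q := by
    calc 3 ≤ p := hp3
    _ ≤ p ^ n := Nat.le_self_pow hn0 p
  set S := q * q + q + 1 with hS
  have hS4 : S % 4 = 3 := by
    have h1 : q * q % 4 = 1 := by
      rw [Nat.mul_mod, hq4]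
    omega
  have hfact : p ^ (3 * n) - 1 = (q - 1) * S := by
    have h3 : p ^ (3 * n) = q * q * q := by
      rw [show 3 * n = n + n + n by ring, pow_add, pow_add]
    obtain ⟨t, ht⟩ : ∃ t, q = t + 1 := ⟨q - 1, by omega⟩
    have : (q - 1) * S + 1 = q * q * q := by
      rw [hS, ht]; simp only [Nat.add_sub_cancel]; ring
    omega
  have hSodd : S % 2 = 1 := by omega
  -- odd part multiplication
  have hSfac : S.factorization 2 = 0 :=
    Nat.factorization_eq_zero_of_not_dvd (by omega)
  have hmul : oddPart ((q - 1) * S) = oddPart (q - 1) * S := by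
    unfold oddPart
    have := Nat.ordCompl_mul (q - 1) S 2
    simpa [hSfac] using this
  set k := oddPart (q - 1) with hk
  have hkodd : k % 2 = 1 := by
    have h2 : ¬ (2 ∣ (q - 1) / 2 ^ ((q - 1).factorization 2)) :=
      Nat.not_dvd_ordCompl Nat.prime_two (by omega)
    have hkk : k = (q - 1) / 2 ^ ((q - 1).factorization 2) := rfl
    omega
  have hkS : oddPart (p ^ (3 * n) - 1) = k * S := by rw [hfact, hmul]
  set k' := oddPart (p ^ (3 * n) - 1) with hk'
  have hk'4 : k' % 4 = k % 4 * 3 % 4 := by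
    rw [hkS, Nat.mul_mod, hS4]
  have hk'odd : k' % 2 = 1 := by
    rw [hkS, Nat.mul_mod, hkodd, hSodd]
  -- reduce paperfold
  have e1 : paperfold m (p ^ (3 * n) - 1) % 2 = (k' - 1) / 2 % 2 := by
    unfold paperfold; rw [← hk']; exact pf_mod_two m k' hm hk'odd
  have e2 : paperfold m (q - 1) % 2 = (k - 1) / 2 % 2 := by
    unfold paperfold; rw [← hk]; exact pf_mod_two m k hm hkodd
  rw [e1, show p ^ n - 1 = q - 1 from rfl, e2]
  rcases (by omega : k % 4 = 1 ∨ k % 4 = 3) with h | h <;> rw [h] at hk'4 <;>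
    norm_num at hk'4 <;> omega

/-- for `p` an odd prime with `p - 1 = 2^m·x`, `x` odd, the sequence
`n ↦ f_{p^n - 1} mod 2` is not eventually periodic; in particular for every even
period `d ≥ 1` and threshold `N` there is `n ≥ N` with
`f_{p^{nd}-1} ≢ f_{p^{3nd}-1} (mod 2)`. -/
theorem paperfold_pow_not_eventually_periodic (p m x : ℕ) (hp : p.Prime) (hodd : Odd p)
    (hm : 1 ≤ m) (hx : Odd x) (hpx : p - 1 = 2 ^ m * x) :
    (¬ ∃ N d : ℕ, 1 ≤ d ∧ ∀ n : ℕ, N ≤ n →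
        paperfold m (p ^ (n + d) - 1) % 2 = paperfold m (p ^ n - 1) % 2) ∧
    (∀ d N : ℕ, 1 ≤ d → Even d → ∃ n : ℕ, N ≤ n ∧
        ¬ paperfold m (p ^ (n * d) - 1) ≡ paperfold m (p ^ (3 * n * d) - 1) [MOD 2]) := by
  have hp3 : 3 ≤ p := by
    rcases hp.two_le.lt_or_eq with h | h
    · omega
    · exfalso; rw [← h] at hodd; exact (Nat.not_odd_iff_even.mpr (by decide)) hodd
  constructor
  · rintro ⟨N, d, hd, hper⟩
    -- iterate periodicity
    have hiter : ∀ j n : ℕ, N ≤ n →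
        paperfold m (p ^ (n + j * d) - 1) % 2 = paperfold m (p ^ n - 1) % 2 := by
      intro j
      induction j with
      | zero => simp
      | succ i ih =>
        intro n hn
        have h1 := hper (n + i * d) (by omega)
        rw [show n + (i + 1) * d = n + i * d + d by ring, h1, ih n hn]
    set n₀ := 2 * d * (N + 1) with hn₀
    have hn₀N : N ≤ n₀ := by
      rw [hn₀]
      calc N ≤ 2 * 1 * (N + 1) := by omega
      _ ≤ 2 * d * (N + 1) := by
        apply Nat.mul_le_mul_right
        omega
    have hkey := key p m n₀ hodd hp3 hm ⟨d * (N + 1), by ring⟩ (by positivity)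
    have h3 := hiter (2 * (2 * (N + 1))) n₀ hn₀N
    rw [show n₀ + 2 * (2 * (N + 1)) * d = 3 * n₀ by rw [hn₀]; ring] at h3
    exact hkey h3
  · intro d N hd hde
    refine ⟨N + 1, by omega, ?_⟩
    obtain ⟨c, hc⟩ := hde
    have hkey := key p m ((N + 1) * d) hodd hp3 hm ⟨(N + 1) * c, by rw [hc]; ring⟩
      (by positivity)
    rw [show 3 * (N + 1) * d = 3 * ((N + 1) * d) by ring]
    intro h
    exact hkey (Nat.ModEq.symm h)
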